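/- Let E be a real inner product space and let a : [0,∞) → ℝ be monotone nondecreasing with a(0) = 0. Define A : E → E by A(w) = (a(‖w‖)/‖w‖)·w for w ≠ 0 and A(0) = 0. Then for all u, v ∈ E one has ⟨A(u) − A(v), u − v⟩ ≥ (a(‖u‖) − a(‖v‖))·(‖u‖ − ‖v‖) ≥ 0. -/

import Mathlib

/-- Monotonicity inequality for the vector field `w ↦ (a ‖w‖ / ‖w‖) • w` underlying the
operator `Q[u] = div((a(|∇u|)/|∇u|)∇u)`. -/
theorem stmt_0 {E : Type*} [NormedAddCommGroup E] [InnerProductSpace ℝ E]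
    (a : ℝ → ℝ) (ha_mono : MonotoneOn a (Set.Ici 0)) (ha0 : a 0 = 0)
    (A : E → E) (hA0 : A 0 = 0)
    (hA : ∀ w : E, w ≠ 0 → A w = (a ‖w‖ / ‖w‖) • w)
    (u v : E) :
    (a ‖u‖ - a ‖v‖) * (‖u‖ - ‖v‖) ≤ (inner ℝ (A u - A v) (u - v) : ℝ) ∧
      0 ≤ (a ‖u‖ - a ‖v‖) * (‖u‖ - ‖v‖) := by
  have han : ∀ t : ℝ, 0 ≤ t → 0 ≤ a t := fun t ht => ha0 ▸ ha_mono (Set.mem_Ici.mpr le_rfl) ht ht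
  have hsecond : 0 ≤ (a ‖u‖ - a ‖v‖) * (‖u‖ - ‖v‖) := by
    rcases le_total ‖u‖ ‖v‖ with h | h
    · have := ha_mono (norm_nonneg u) (norm_nonneg v) h
      nlinarith
    · have := ha_mono (norm_nonneg v) (norm_nonneg u) h
      nlinarith
  refine ⟨?_, hsecond⟩
  by_cases hu : u = 0
  · by_cases hv : v = 0
    · simp [hu, hv, hA0, ha0]
    · rw [hu, hA0, hA v hv]
      have hvn : (0 : ℝ) < ‖v‖ := norm_pos_iff.mpr hv
      rw [zero_sub, zero_sub, inner_neg_neg, real_inner_smul_left,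
        real_inner_self_eq_norm_mul_norm]
      simp only [norm_zero, ha0]
      have hq : a ‖v‖ / ‖v‖ * (‖v‖ * ‖v‖) = a ‖v‖ * ‖v‖ := by field_simp
      rw [hq]; nlinarith
  · by_cases hv : v = 0
    · rw [hv, hA0, hA u hu]
      have hun : (0 : ℝ) < ‖u‖ := norm_pos_iff.mpr hu
      rw [sub_zero, sub_zero, real_inner_smul_left, real_inner_self_eq_norm_mul_norm]
      simp only [norm_zero, ha0]
      have hq : a ‖u‖ / ‖u‖ * (‖u‖ * ‖u‖) = a ‖u‖ * ‖u‖ := by field_simp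
      rw [hq]; nlinarith
    · rw [hA u hu, hA v hv]
      have hun : (0 : ℝ) < ‖u‖ := norm_pos_iff.mpr hu
      have hvn : (0 : ℝ) < ‖v‖ := norm_pos_iff.mpr hv
      have key : (inner ℝ ((a ‖u‖ / ‖u‖) • u - (a ‖v‖ / ‖v‖) • v) (u - v) : ℝ) =
          a ‖u‖ * ‖u‖ - (a ‖u‖ / ‖u‖) * inner ℝ u v - (a ‖v‖ / ‖v‖) * inner ℝ v u
            + a ‖v‖ * ‖v‖ := by
        rw [inner_sub_left, inner_sub_right, inner_sub_right, real_inner_smul_left,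
          real_inner_smul_left, real_inner_smul_left, real_inner_smul_left,
          real_inner_self_eq_norm_mul_norm, real_inner_self_eq_norm_mul_norm]
        field_simp
        ring
      rw [key]
      have hip : (inner ℝ u v : ℝ) ≤ ‖u‖ * ‖v‖ := real_inner_le_norm u v
      have hip' : (inner ℝ v u : ℝ) ≤ ‖v‖ * ‖u‖ := real_inner_le_norm v u
      have hau : 0 ≤ a ‖u‖ := han _ (norm_nonneg u)
      have hav : 0 ≤ a ‖v‖ := han _ (norm_nonneg v)
      have h1 : (a ‖u‖ / ‖u‖) * inner ℝ u v ≤ a ‖u‖ * ‖v‖ := by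
        have : (a ‖u‖ / ‖u‖) * inner ℝ u v ≤ (a ‖u‖ / ‖u‖) * (‖u‖ * ‖v‖) := by
          apply mul_le_mul_of_nonneg_left hip (by positivity)
        calc (a ‖u‖ / ‖u‖) * inner ℝ u v ≤ (a ‖u‖ / ‖u‖) * (‖u‖ * ‖v‖) := this
          _ = a ‖u‖ * ‖v‖ := by field_simp
      have h2 : (a ‖v‖ / ‖v‖) * inner ℝ v u ≤ a ‖v‖ * ‖u‖ := by
        have : (a ‖v‖ / ‖v‖) * inner ℝ v u ≤ (a ‖v‖ / ‖v‖) * (‖v‖ * ‖u‖) := by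
          apply mul_le_mul_of_nonneg_left hip' (by positivity)
        calc (a ‖v‖ / ‖v‖) * inner ℝ v u ≤ (a ‖v‖ / ‖v‖) * (‖v‖ * ‖u‖) := this
          _ = a ‖v‖ * ‖u‖ := by field_simp
      nlinarith
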